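/- Let 0 < y ≤ z ≤ x be real numbers and let B be a finite nonempty set of real numbers contained in (y, z]. Assign a positive weight w(b) to each b ∈ B. Then there exists a positive integer k ≤ x/y such that ∑ over k-tuples (b₁,…,b_k) ∈ B^k with b₁+⋯+b_k ∈ (x−z, x] of w(b₁)⋯w(b_k) is at least (y/x)·(∑_{b∈B} w(b))^k. -/

import Mathlib

open Finset Classical in
theorem stmt_2 (x y z : ℝ) (hy : 0 < y) (hyz : y ≤ z) (hzx : z ≤ x)
    (B : Finset ℝ) (hBne : B.Nonempty) (hB : ∀ b ∈ B, y < b ∧ b ≤ z)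
    (w : ℝ → ℝ) (hw : ∀ b ∈ B, 0 < w b) :
    ∃ k : ℕ, 0 < k ∧ (k : ℝ) ≤ x / y ∧
      ∑ t ∈ (Fintype.piFinset fun _ : Fin k => B).filter
          (fun t => x - z < ∑ i, t i ∧ ∑ i, t i ≤ x),
        ∏ i, w (t i) ≥ (y / x) * (∑ b ∈ B, w b) ^ k := by
  have hxpos : 0 < x := lt_of_lt_of_le hy (hyz.trans hzx)
  set W := ∑ b ∈ B, w b with hWdef
  have hWpos : 0 < W := Finset.sum_pos hw hBne
  set P : ℕ → ℝ := fun k =>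
    ∑ t ∈ (Fintype.piFinset fun _ : Fin k => B).filter (fun t => ∑ i, t i ≤ x),
      ∏ i, w (t i) with hPdef
  set T : ℕ → ℝ := fun k =>
    ∑ t ∈ (Fintype.piFinset fun _ : Fin k => B).filter
        (fun t => x - z < ∑ i, t i ∧ ∑ i, t i ≤ x),
      ∏ i, w (t i) with hTdef
  have hprodpos : ∀ (k : ℕ) (t : Fin k → ℝ), t ∈ Fintype.piFinset (fun _ : Fin k => B) →
      0 < ∏ i, w (t i) := fun k t ht =>
    Finset.prod_pos fun i _ => hw _ (Fintype.mem_piFinset.mp ht i)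
  have hTnonneg : ∀ k, 0 ≤ T k := by
    intro k
    apply Finset.sum_nonneg
    intro t ht
    exact (hprodpos k t (Finset.mem_filter.mp ht).1).le
  -- key step
  have step : ∀ k, W * P k ≤ P (k + 1) + W * T k := by
    intro k
    set S := (Fintype.piFinset fun _ : Fin k => B).filter (fun t => ∑ i, t i ≤ x) with hS
    set G := (Fintype.piFinset fun _ : Fin k => B).filter
        (fun t => x - z < ∑ i, t i ∧ ∑ i, t i ≤ x) with hG
    have hWP : W * P k = ∑ p ∈ B ×ˢ S, w p.1 * ∏ i, w (p.2 i) := by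
      rw [Finset.sum_product, hWdef, Finset.sum_mul_sum]
    set A := (B ×ˢ S).filter (fun p => p.1 + ∑ i, p.2 i ≤ x) with hA
    set C := (B ×ˢ S).filter (fun p => ¬ (p.1 + ∑ i, p.2 i ≤ x)) with hC
    have hApart : ∑ p ∈ A, w p.1 * ∏ i, w (p.2 i) ≤ P (k + 1) := by
      have hinj : Set.InjOn (fun p : ℝ × (Fin k → ℝ) => Fin.cons p.1 p.2 : _ → Fin (k+1) → ℝ)
          ↑A := by
        intro p _ q _ hpq
        have h0 : p.1 = q.1 := by
          have := congrFun hpq 0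
          simpa using this
        have ht : p.2 = q.2 := by
          funext i
          have := congrFun hpq i.succ
          simpa using this
        exact Prod.ext h0 ht
      have himg : ∑ p ∈ A, w p.1 * ∏ i, w (p.2 i)
          = ∑ t ∈ A.image (fun p => Fin.cons p.1 p.2), ∏ i : Fin (k+1), w (t i) := by
        rw [Finset.sum_image hinj]
        apply Finset.sum_congr rfl
        intro p hp
        simp [Fin.prod_univ_succ]
      rw [himg]
      apply Finset.sum_le_sum_of_subset_of_nonneg
      · intro t ht
        simp only [Finset.mem_image] at ht
        obtain ⟨p, hp, rfl⟩ := ht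
        have hp' := Finset.mem_filter.mp hp
        have hpB := (Finset.mem_product.mp hp'.1).1
        have hpS := Finset.mem_filter.mp (Finset.mem_product.mp hp'.1).2
        refine Finset.mem_filter.mpr ⟨?_, ?_⟩
        · rw [Fintype.mem_piFinset]
          intro i
          refine Fin.cases ?_ ?_ i
          · simpa using hpB
          · intro j
            simpa using Fintype.mem_piFinset.mp hpS.1 j
        · simpa [Fin.sum_univ_succ] using hp'.2
      · intro t ht _
        exact (hprodpos (k+1) t (Finset.mem_filter.mp ht).1).le
    have hCpart : ∑ p ∈ C, w p.1 * ∏ i, w (p.2 i) ≤ W * T k := by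
      have hsub : C ⊆ B ×ˢ G := by
        intro p hp
        have hp' := Finset.mem_filter.mp hp
        have hpB := (Finset.mem_product.mp hp'.1).1
        have hpS := Finset.mem_filter.mp (Finset.mem_product.mp hp'.1).2
        have hpz : p.1 ≤ z := (hB _ hpB).2
        have hgt : x < p.1 + ∑ i, p.2 i := lt_of_not_ge hp'.2
        refine Finset.mem_product.mpr ⟨hpB, Finset.mem_filter.mpr ⟨hpS.1, ?_, hpS.2⟩⟩
        linarith
      calc ∑ p ∈ C, w p.1 * ∏ i, w (p.2 i)
          ≤ ∑ p ∈ B ×ˢ G, w p.1 * ∏ i, w (p.2 i) := by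
            apply Finset.sum_le_sum_of_subset_of_nonneg hsub
            intro p hp _
            have hp' := Finset.mem_product.mp hp
            have := Finset.mem_filter.mp hp'.2
            exact mul_nonneg (hw _ hp'.1).le (hprodpos k p.2 this.1).le
        _ = W * T k := by
            rw [Finset.sum_product, hWdef, Finset.sum_mul_sum]
    calc W * P k = ∑ p ∈ B ×ˢ S, w p.1 * ∏ i, w (p.2 i) := hWP
      _ = (∑ p ∈ A, w p.1 * ∏ i, w (p.2 i)) + ∑ p ∈ C, w p.1 * ∏ i, w (p.2 i) :=
          (Finset.sum_filter_add_sum_filter_not _ _ _).symm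
      _ ≤ P (k + 1) + W * T k := add_le_add hApart hCpart
  -- main induction
  have main : ∀ n, W ^ n ≤ P n + ∑ k ∈ Finset.range n, T k * W ^ (n - k) := by
    intro n
    induction n with
    | zero =>
      simp only [pow_zero, Finset.range_zero, Finset.sum_empty, add_zero, hPdef]
      have : ((Fintype.piFinset fun _ : Fin 0 => B).filter
          (fun t => ∑ i, t i ≤ x)) = Fintype.piFinset fun _ : Fin 0 => B := by
        apply Finset.filter_true_of_mem
        intro t _
        simp [hxpos.le]
      rw [this]
      simp
    | succ n ih =>
      have h1 : W ^ (n + 1) = W * W ^ n := by ring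
      have h2 : W * W ^ n ≤ W * (P n + ∑ k ∈ Finset.range n, T k * W ^ (n - k)) :=
        mul_le_mul_of_nonneg_left ih hWpos.le
      have h3 : W * (P n + ∑ k ∈ Finset.range n, T k * W ^ (n - k))
          = W * P n + ∑ k ∈ Finset.range n, T k * W ^ (n + 1 - k) := by
        rw [mul_add]
        congr 1
        rw [Finset.mul_sum]
        apply Finset.sum_congr rfl
        intro k hk
        have hkn : k < n := Finset.mem_range.mp hk
        have : n + 1 - k = (n - k) + 1 := by omega
        rw [this, pow_succ]
        ring
      have h4 : W * P n + ∑ k ∈ Finset.range n, T k * W ^ (n + 1 - k)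
          ≤ P (n + 1) + ∑ k ∈ Finset.range (n + 1), T k * W ^ (n + 1 - k) := by
        rw [Finset.sum_range_succ]
        have : n + 1 - n = 1 := by omega
        rw [this, pow_one]
        have := step n
        linarith
      calc W ^ (n + 1) = W * W ^ n := h1
        _ ≤ W * (P n + ∑ k ∈ Finset.range n, T k * W ^ (n - k)) := h2
        _ = W * P n + ∑ k ∈ Finset.range n, T k * W ^ (n + 1 - k) := h3
        _ ≤ P (n + 1) + ∑ k ∈ Finset.range (n + 1), T k * W ^ (n + 1 - k) := h4
  set N := Nat.floor (x / y) with hNdef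
  have hxy1 : (1 : ℝ) ≤ x / y := (one_le_div hy).mpr (hyz.trans hzx)
  have hN1 : 1 ≤ N := Nat.le_floor (by exact_mod_cast hxy1)
  have hNx : (N : ℝ) ≤ x / y := Nat.floor_le (by positivity)
  have hxK : x < (N + 1 : ℝ) * y := by
    have h := Nat.lt_floor_add_one (x / y)
    have : x / y * y = x := div_mul_cancel₀ x hy.ne'
    nlinarith
  have hPK : P (N + 1) = 0 := by
    have hempty : ∀ t ∈ Fintype.piFinset (fun _ : Fin (N + 1) => B), ¬ (∑ i, t i ≤ x) := by
      intro t ht hle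
      have hlt : ∑ _i : Fin (N + 1), y < ∑ i, t i :=
        Finset.sum_lt_sum_of_nonempty Finset.univ_nonempty
          (fun i _ => (hB _ (Fintype.mem_piFinset.mp ht i)).1)
      have hsy : ∑ _i : Fin (N + 1), y = (N + 1 : ℝ) * y := by
        rw [Finset.sum_const, Finset.card_univ, Fintype.card_fin, nsmul_eq_mul]
        push_cast
        ring
      rw [hsy] at hlt
      linarith
    simp only [hPdef]
    rw [Finset.filter_false_of_mem hempty, Finset.sum_empty]
  have hT0 : T 0 = 0 := by
    have hempty : ∀ t ∈ Fintype.piFinset (fun _ : Fin 0 => B),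
        ¬ (x - z < ∑ i, t i ∧ ∑ i, t i ≤ x) := by
      intro t _ ⟨h1, _⟩
      simp only [Finset.univ_eq_empty, Finset.sum_empty] at h1
      linarith
    simp only [hTdef]
    rw [Finset.filter_false_of_mem hempty, Finset.sum_empty]
  have hmain := main (N + 1)
  rw [hPK, zero_add] at hmain
  have hsum : W ^ (N + 1) ≤ ∑ k ∈ Finset.Ico 1 (N + 1), T k * W ^ (N + 1 - k) := by
    rw [Finset.sum_range_eq_add_Ico _ (Nat.succ_pos N), hT0, zero_mul, zero_add] at hmain
    exact hmain
  have hNpos : (0 : ℝ) < N := by exact_mod_cast Nat.lt_of_lt_of_le Nat.zero_lt_one hN1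
  have hcard : (Finset.Ico 1 (N + 1)).card = N := by simp
  have hne : (Finset.Ico 1 (N + 1)).Nonempty := ⟨1, Finset.mem_Ico.mpr ⟨le_refl 1, by omega⟩⟩
  obtain ⟨k, hk, hkle⟩ := Finset.exists_le_of_sum_le (f := fun _ => W ^ (N + 1) / N)
    (g := fun k => T k * W ^ (N + 1 - k)) hne (by
      rw [Finset.sum_const, hcard, nsmul_eq_mul]
      have : (N : ℝ) * (W ^ (N + 1) / N) = W ^ (N + 1) := by field_simp
      rw [this]
      exact hsum)
  have hk' := Finset.mem_Ico.mp hk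
  have h1k : 1 ≤ k := hk'.1
  have hkN : k ≤ N := Nat.lt_succ_iff.mp hk'.2
  refine ⟨k, h1k, ?_, ?_⟩
  · calc (k : ℝ) ≤ (N : ℝ) := by exact_mod_cast hkN
      _ ≤ x / y := hNx
  · have hWk : (0 : ℝ) < W ^ (N + 1 - k) := pow_pos hWpos _
    have hpow : W ^ (N + 1) = W ^ k * W ^ (N + 1 - k) := by
      rw [← pow_add]
      congr 1
      omega
    have h2 : W ^ k / N ≤ T k := by
      rw [hpow] at hkle
      have h3 : (W ^ k / N) * W ^ (N + 1 - k) ≤ T k * W ^ (N + 1 - k) := by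
        calc (W ^ k / N) * W ^ (N + 1 - k) = W ^ k * W ^ (N + 1 - k) / N := by ring
          _ ≤ T k * W ^ (N + 1 - k) := hkle
      exact le_of_mul_le_mul_right h3 hWk
    have h4 : (y / x) * W ^ k ≤ W ^ k / N := by
      have hyx : y / x ≤ 1 / N := by
        rw [div_le_div_iff₀ hxpos hNpos]
        have hNy : (N : ℝ) * y ≤ x := (le_div_iff₀ hy).mp hNx
        linarith
      calc (y / x) * W ^ k ≤ (1 / N) * W ^ k :=
            mul_le_mul_of_nonneg_right hyx (pow_nonneg hWpos.le k)
        _ = W ^ k / N := by ring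
    have h5 : (y / x) * W ^ k ≤ T k := h4.trans h2
    simpa only [hTdef] using h5
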